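/- Let 𝒜' and 𝒜 be abelian categories and i : 𝒜' → 𝒜 a fully faithful exact functor whose essential image is a Serre subcategory of 𝒜. Suppose i admits an (everywhere defined) right adjoint p, with counit ε_A : i(pA) → A for each A ∈ 𝒜 (a monomorphism). Then the following are equivalent: (i) p is exact; (ii) the full subcategory Ker p = { A : pA ≅ 0 } is stable under quotients and contains the cokernel of ε_A for every A ∈ 𝒜; (iii) for every A ∈ 𝒜, the cokernel Q of ε_A satisfies Hom_𝒜(iX, Q) = 0 and Hom_𝒜(Q, iX) = 0 for all X ∈ 𝒜'. -/

import Mathlib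

open CategoryTheory Limits

namespace StmtAux10

variable {A' : Type*} {A : Type*} [Category A'] [Category A]
    [Abelian A'] [Abelian A]
    (i : A' ⥤ A) [i.Full] [i.Faithful]
    [PreservesFiniteLimits i] [PreservesFiniteColimits i]
    (p : A ⥤ A') (adj : i ⊣ p)

lemma isZero_i_obj {X : A'} (h : IsZero X) : IsZero (i.obj X) :=
  i.map_isZero h

lemma isIso_p_map_counit (X : A) : IsIso (p.map (adj.counit.app X)) := by
  rw [IsIso.eq_inv_of_hom_inv_id (adj.right_triangle_components X)]
  infer_instance

variable (hSerre : ∀ (S : ShortComplex A), S.ShortExact →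
        (i.essImage S.X₂ ↔ (i.essImage S.X₁ ∧ i.essImage S.X₃)))

include hSerre in
lemma essImage_of_mono {K M : A} (f : K ⟶ M) [Mono f] (hM : i.essImage M) :
    i.essImage K := by
  have hse : (ShortComplex.mk f (cokernel.π f) (cokernel.condition f)).ShortExact :=
    { exact := ShortComplex.exact_cokernel f }
  exact ((hSerre _ hse).mp hM).1

include hSerre in
lemma essImage_of_epi {M K : A} (f : M ⟶ K) [Epi f] (hM : i.essImage M) :
    i.essImage K := by
  have hse : (ShortComplex.mk (kernel.ι f) f (kernel.condition f)).ShortExact :=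
    { exact := ShortComplex.exact_kernel f }
  exact ((hSerre _ hse).mp hM).2

include hSerre in
lemma counit_mono (X : A) : Mono (adj.counit.app X) := by
  haveI : p.IsRightAdjoint := ⟨i, ⟨adj⟩⟩
  haveI := adj.rightAdjoint_preservesLimits
  haveI := isIso_p_map_counit i p adj X
  -- the kernel of the counit has zero image under p
  have h1 : IsZero (p.obj (kernel (adj.counit.app X))) := by
    have e : p.obj (kernel (adj.counit.app X)) ≅ kernel (p.map (adj.counit.app X)) :=
      PreservesKernel.iso p _
    have hz : IsZero (kernel (p.map (adj.counit.app X))) :=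
      IsZero.of_mono_eq_zero (kernel.ι (p.map (adj.counit.app X))) (kernel.ι_of_mono _)
    exact hz.of_iso e
  -- the kernel is in the essential image
  have h2 : i.essImage (kernel (adj.counit.app X)) :=
    essImage_of_mono i hSerre (kernel.ι (adj.counit.app X))
      (i.obj_mem_essImage (p.obj X))
  obtain ⟨W, ⟨e⟩⟩ := h2
  have hW : IsZero W := by
    have : IsZero (p.obj (i.obj W)) := h1.of_iso (p.mapIso e)
    exact this.of_iso (asIso (adj.unit.app W))
  have hK : IsZero (kernel (adj.counit.app X)) := (isZero_i_obj i hW).of_iso e.symm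
  exact Preadditive.mono_of_isZero_kernel _ hK

include adj in
lemma isZero_p_obj_iff (Q : A) :
    IsZero (p.obj Q) ↔ ∀ (Y : A') (g : i.obj Y ⟶ Q), g = 0 := by
  haveI : p.IsRightAdjoint := ⟨i, ⟨adj⟩⟩
  constructor
  · intro h Y g
    have hg : adj.homEquiv Y Q g = 0 := h.eq_of_tgt _ _
    have := (adj.homEquiv Y Q).symm_apply_apply g
    rw [← this, hg, Adjunction.homEquiv_counit, i.map_zero, zero_comp]
  · intro h
    have hz : adj.counit.app Q = 0 := h (p.obj Q) (adj.counit.app Q)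
    rw [IsZero.iff_id_eq_zero]
    rw [← adj.right_triangle_components Q, hz, p.map_zero, comp_zero]

end StmtAux10

open StmtAux10 in
/-- Proposition D.1.8: for `i : 𝒜' ⥤ 𝒜` fully faithful exact with Serre essential image and
an everywhere defined right adjoint `p`, the following are equivalent: (i) `p` is exact;
(ii) `Ker p` is stable under quotients and contains the cokernel of each counit map;
(iii) for every `A`, with `Q` the cokernel of the counit `i p A ⟶ A`, one has
`Hom(i X, Q) = 0` and `Hom(Q, i X) = 0` for all `X ∈ 𝒜'`. -/
theorem stmt_10 {A' : Type*} {A : Type*} [Category A'] [Category A]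
    [Abelian A'] [Abelian A]
    (i : A' ⥤ A) [i.Full] [i.Faithful]
    [PreservesFiniteLimits i] [PreservesFiniteColimits i]
    (hSerre : ∀ (S : ShortComplex A), S.ShortExact →
        (i.essImage S.X₂ ↔ (i.essImage S.X₁ ∧ i.essImage S.X₃)))
    (p : A ⥤ A') (adj : i ⊣ p) :
    ((Nonempty (PreservesFiniteLimits p) ∧ Nonempty (PreservesFiniteColimits p)) ↔
      ((∀ (X Y : A) (f : X ⟶ Y), Epi f → IsZero (p.obj X) → IsZero (p.obj Y)) ∧
       (∀ X : A, IsZero (p.obj (cokernel (adj.counit.app X)))))) ∧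
    (((∀ (X Y : A) (f : X ⟶ Y), Epi f → IsZero (p.obj X) → IsZero (p.obj Y)) ∧
       (∀ X : A, IsZero (p.obj (cokernel (adj.counit.app X))))) ↔
      (∀ X : A,
        (∀ (Y : A') (g : i.obj Y ⟶ cokernel (adj.counit.app X)), g = 0) ∧
        (∀ (Y : A') (g : cokernel (adj.counit.app X) ⟶ i.obj Y), g = 0))) := by
  haveI : p.IsRightAdjoint := ⟨i, ⟨adj⟩⟩
  haveI := adj.rightAdjoint_preservesLimits
  haveI : p.Additive := Functor.additive_of_preserves_binary_products p
  -- (i) → (ii)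
  have h12 : (Nonempty (PreservesFiniteLimits p) ∧ Nonempty (PreservesFiniteColimits p)) →
      ((∀ (X Y : A) (f : X ⟶ Y), Epi f → IsZero (p.obj X) → IsZero (p.obj Y)) ∧
       (∀ X : A, IsZero (p.obj (cokernel (adj.counit.app X))))) := by
    rintro ⟨-, ⟨hc⟩⟩
    constructor
    · intro X Y f hf hzX
      haveI := hf
      -- p.map f is epi
      have hepi : Epi (p.map f) := by
        apply Preadditive.epi_of_isZero_cokernel
        have e : p.obj (cokernel f) ≅ cokernel (p.map f) := PreservesCokernel.iso p f
        have : IsZero (p.obj (cokernel f)) := by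
          apply p.map_isZero
          exact IsZero.of_epi_eq_zero (cokernel.π f) (cokernel.π_of_epi f)
        exact this.of_iso e.symm
      haveI := hepi
      exact IsZero.of_epi (p.map f) hzX
    · intro X
      haveI := isIso_p_map_counit i p adj X
      have e : p.obj (cokernel (adj.counit.app X)) ≅ cokernel (p.map (adj.counit.app X)) :=
        PreservesCokernel.iso p _
      have hz : IsZero (cokernel (p.map (adj.counit.app X))) :=
        IsZero.of_epi_eq_zero (cokernel.π (p.map (adj.counit.app X))) (cokernel.π_of_epi _)
      exact hz.of_iso e
  -- (ii) → (i)
  have h21 : ((∀ (X Y : A) (f : X ⟶ Y), Epi f → IsZero (p.obj X) → IsZero (p.obj Y)) ∧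
       (∀ X : A, IsZero (p.obj (cokernel (adj.counit.app X))))) →
      (Nonempty (PreservesFiniteLimits p) ∧ Nonempty (PreservesFiniteColimits p)) := by
    rintro ⟨hstab, hQ⟩
    refine ⟨⟨inferInstance⟩, ?_⟩
    haveI : p.PreservesEpimorphisms := by
      constructor
      intro X Y f hf
      -- u := counit ≫ f
      set u : i.obj (p.obj X) ⟶ Y := adj.counit.app X ≫ f with hu
      have hd0 : adj.counit.app X ≫ f ≫ cokernel.π u = 0 := by
        rw [← Category.assoc, ← hu, cokernel.condition]
      set d : cokernel (adj.counit.app X) ⟶ cokernel u :=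
        cokernel.desc _ (f ≫ cokernel.π u) hd0 with hd
      have hdfac : cokernel.π (adj.counit.app X) ≫ d = f ≫ cokernel.π u :=
        cokernel.π_desc _ _ _
      have hEpiD : Epi d := by
        have : Epi (cokernel.π (adj.counit.app X) ≫ d) := by
          rw [hdfac]; exact epi_comp _ _
        exact epi_of_epi (cokernel.π (adj.counit.app X)) d
      have hzE : IsZero (p.obj (cokernel u)) := hstab _ _ d hEpiD (hQ X)
      -- w := i.map (p.map f)
      have hw : i.map (p.map f) ≫ adj.counit.app Y = u := by
        have := adj.counit.naturality f
        simpa [hu] using this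
      have hm0 : i.map (p.map f) ≫ adj.counit.app Y ≫ cokernel.π u = 0 := by
        rw [← Category.assoc, hw, cokernel.condition]
      set m' : cokernel (i.map (p.map f)) ⟶ cokernel u :=
        cokernel.desc _ (adj.counit.app Y ≫ cokernel.π u) hm0 with hm'
      haveI hmono : Mono m' := by
        apply Preadditive.mono_of_cancel_zero
        intro T g hg
        obtain ⟨T', π, hπ, g', hg'⟩ :=
          surjective_up_to_refinements_of_epi (cokernel.π (i.map (p.map f))) g
        haveI := hπ
        have h1 : (g' ≫ adj.counit.app Y) ≫ cokernel.π u = 0 := by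
          have : g' ≫ cokernel.π (i.map (p.map f)) ≫ m' = g' ≫ adj.counit.app Y ≫ cokernel.π u := by
            rw [cokernel.π_desc]
          rw [Category.assoc, ← this, ← Category.assoc, ← hg', Category.assoc, hg, comp_zero]
        obtain ⟨T'', π', hπ', h', hh'⟩ :=
          (ShortComplex.exact_cokernel u).exact_up_to_refinements (g' ≫ adj.counit.app Y) h1
        haveI := hπ'
        dsimp at hh'
        haveI := counit_mono i p adj hSerre Y
        have h2 : π' ≫ g' = h' ≫ i.map (p.map f) := by
          apply (cancel_mono (adj.counit.app Y)).1
          rw [Category.assoc, Category.assoc, hw, ← hh']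
        have h3 : π' ≫ π ≫ g = 0 := by
          rw [hg', ← Category.assoc, h2]
          simp
        rw [← cancel_epi π, ← cancel_epi π', comp_zero, comp_zero, h3]
      -- hence p of cokernel (i p f) is zero
      have hzc : IsZero (p.obj (cokernel (i.map (p.map f)))) := by
        haveI : Mono (p.map m') := p.map_mono m'
        exact IsZero.of_mono (p.map m') hzE
      -- transfer to cokernel (p.map f)
      have e1 : i.obj (cokernel (p.map f)) ≅ cokernel (i.map (p.map f)) :=
        PreservesCokernel.iso i _
      have hz2 : IsZero (p.obj (i.obj (cokernel (p.map f)))) :=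
        hzc.of_iso (p.mapIso e1)
      have hz3 : IsZero (cokernel (p.map f)) :=
        hz2.of_iso (asIso (adj.unit.app (cokernel (p.map f))))
      exact Preadditive.epi_of_isZero_cokernel _ hz3
    haveI : ∀ {X Y : A} (f : X ⟶ Y), PreservesLimit (parallelPair f 0) p :=
      fun f => inferInstance
    haveI := Functor.preservesHomology_of_preservesEpis_and_kernels p
    exact ⟨Functor.preservesFiniteColimits_of_preservesHomology p⟩
  -- (ii) → (iii)
  have h23 : ((∀ (X Y : A) (f : X ⟶ Y), Epi f → IsZero (p.obj X) → IsZero (p.obj Y)) ∧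
       (∀ X : A, IsZero (p.obj (cokernel (adj.counit.app X))))) →
      (∀ X : A,
        (∀ (Y : A') (g : i.obj Y ⟶ cokernel (adj.counit.app X)), g = 0) ∧
        (∀ (Y : A') (g : cokernel (adj.counit.app X) ⟶ i.obj Y), g = 0)) := by
    rintro ⟨hstab, hQ⟩ X
    refine ⟨(isZero_p_obj_iff i p adj _).mp (hQ X), ?_⟩
    intro Y g
    have himg : i.essImage (image g) :=
      essImage_of_mono i hSerre (image.ι g) (i.obj_mem_essImage Y)
    obtain ⟨W, ⟨e⟩⟩ := himg
    have hpImg : IsZero (p.obj (image g)) :=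
      hstab _ _ (factorThruImage g) inferInstance (hQ X)
    have hW : IsZero W := by
      have : IsZero (p.obj (i.obj W)) := hpImg.of_iso (p.mapIso e)
      exact this.of_iso (asIso (adj.unit.app W))
    have hI : IsZero (image g) := (isZero_i_obj i hW).of_iso e.symm
    rw [← image.fac g, hI.eq_zero_of_src (image.ι g), comp_zero]
  -- (iii) → (ii)
  have h31 : (∀ X : A,
        (∀ (Y : A') (g : i.obj Y ⟶ cokernel (adj.counit.app X)), g = 0) ∧
        (∀ (Y : A') (g : cokernel (adj.counit.app X) ⟶ i.obj Y), g = 0)) →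
      ((∀ (X Y : A) (f : X ⟶ Y), Epi f → IsZero (p.obj X) → IsZero (p.obj Y)) ∧
       (∀ X : A, IsZero (p.obj (cokernel (adj.counit.app X))))) := by
    intro h3
    constructor
    · intro X Y f hf hzX
      haveI := hf
      have hziX : IsZero (i.obj (p.obj X)) := isZero_i_obj i hzX
      -- claim: every map from the essential image into Y vanishes
      have claim : ∀ (Z : A') (g : i.obj Z ⟶ Y), g = 0 := by
        intro Z g
        haveI : Epi (pullback.fst g f) := inferInstance
        have hsnd : adj.counit.app (pullback g f) ≫ pullback.snd g f = 0 := by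
          have hnat := adj.counit.naturality (pullback.snd g f)
          simp only [Functor.comp_map, Functor.id_map] at hnat
          rw [← hnat]
          have : adj.counit.app X = 0 := hziX.eq_zero_of_src _
          rw [this, comp_zero]
        have hEpiH : Epi (adj.counit.app (pullback g f) ≫ pullback.fst g f) := by
          set h := adj.counit.app (pullback g f) ≫ pullback.fst g f with hh
          have hcmem : i.essImage (cokernel h) :=
            essImage_of_epi i hSerre (cokernel.π h) (i.obj_mem_essImage Z)
          obtain ⟨W, ⟨e⟩⟩ := hcmem
          have hd0 : adj.counit.app (pullback g f) ≫ pullback.fst g f ≫ cokernel.π h = 0 := by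
            rw [← Category.assoc, ← hh, cokernel.condition]
          set d : cokernel (adj.counit.app (pullback g f)) ⟶ cokernel h :=
            cokernel.desc _ (pullback.fst g f ≫ cokernel.π h) hd0 with hd
          have hdz : d = 0 := by
            have h2 := (h3 (pullback g f)).2 W (d ≫ e.inv)
            calc d = (d ≫ e.inv) ≫ e.hom := by simp
            _ = 0 := by rw [h2, zero_comp]
          have hπ : cokernel.π h = 0 := by
            apply zero_of_epi_comp (pullback.fst g f)
            have hpd := cokernel.π_desc (adj.counit.app (pullback g f))
              (pullback.fst g f ≫ cokernel.π h) hd0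
            rw [← hpd, ← hd, hdz, comp_zero]
          exact Preadditive.epi_of_cokernel_zero hπ
        have h0 : (adj.counit.app (pullback g f) ≫ pullback.fst g f) ≫ g = 0 := by
          rw [Category.assoc, pullback.condition, ← Category.assoc, hsnd, zero_comp]
        haveI := hEpiH
        exact zero_of_epi_comp _ h0
      have hz : adj.counit.app Y = 0 := claim (p.obj Y) (adj.counit.app Y)
      haveI := counit_mono i p adj hSerre Y
      have hiso : IsZero (i.obj (p.obj Y)) := IsZero.of_mono_eq_zero _ hz
      have := p.map_isZero hiso
      exact this.of_iso (asIso (adj.unit.app (p.obj Y)))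
    · intro X
      exact (isZero_p_obj_iff i p adj _).mpr (h3 X).1
  exact ⟨⟨h12, h21⟩, ⟨h23, h31⟩⟩
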